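/- Under the setup of the Λ-smooth exact Stiefel/polar update with constant step size α_t = α > 0 for all t, and with L bounded below by L_* = inf_W L(W) > −∞, for every T ≥ 1: min_{0≤t≤T−1} Σ_{i=1}^d σ_{t,i} ≤ (L(W_0) − L_*)/(T·α) + (Λ/2)·d·α. In particular, as T → ∞ the guaranteed stationarity level does not go below (Λ/2)·d·α unless α → 0. -/

import Mathlib

open Matrix

/-- Stationarity bound for the exact Stiefel/polar update with constant step size
`α > 0`: under `Λ`-smoothness and boundedness below (`Lstar = inf L`), for every
`T ≥ 1`, `min_{0 ≤ t ≤ T-1} ∑ i, σv t i ≤ (L (W 0) - Lstar) / (T * α) + (Λ/2) * d * α`. -/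
theorem muon_stationarity_bound_constant_step (d₁ d₂ : ℕ) (h1 : 1 ≤ d₁) (h2 : 1 ≤ d₂)
    (Λ : ℝ)
    (L : Matrix (Fin d₁) (Fin d₂) ℝ → ℝ)
    (G : Matrix (Fin d₁) (Fin d₂) ℝ → Matrix (Fin d₁) (Fin d₂) ℝ)
    (hsmooth : ∀ X Y, L Y ≤ L X + Matrix.trace ((G X)ᵀ * (Y - X))
      + Λ / 2 * Matrix.trace ((Y - X)ᵀ * (Y - X)))
    (Lstar : ℝ) (hLstarLB : ∀ X, Lstar ≤ L X) (hLstarInf : Lstar = ⨅ X, L X)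
    (W : ℕ → Matrix (Fin d₁) (Fin d₂) ℝ)
    (α : ℝ) (hα : 0 < α)
    (U : ℕ → Matrix (Fin d₁) (Fin (min d₁ d₂)) ℝ)
    (V : ℕ → Matrix (Fin d₂) (Fin (min d₁ d₂)) ℝ)
    (σv : ℕ → Fin (min d₁ d₂) → ℝ) (hσ : ∀ t i, 0 ≤ σv t i)
    (hU : ∀ t, (U t)ᵀ * U t = 1) (hV : ∀ t, (V t)ᵀ * V t = 1)
    (hG : ∀ t, G (W t) = U t * Matrix.diagonal (σv t) * (V t)ᵀ)
    (hupd : ∀ t, W (t + 1) = W t - α • (U t * (V t)ᵀ))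
    (T : ℕ) (hT : 1 ≤ T) :
    (Finset.range T).inf' (Finset.nonempty_range_iff.mpr (by omega))
        (fun t => ∑ i, σv t i)
      ≤ (L (W 0) - Lstar) / (T * α) + Λ / 2 * (min d₁ d₂ : ℝ) * α := by
  set dm : ℝ := (min d₁ d₂ : ℝ) with hdm
  set S : ℕ → ℝ := fun t => ∑ i, σv t i with hS
  -- per-step descent
  have key : ∀ t, L (W (t+1)) ≤ L (W t) - α * S t + Λ / 2 * (α^2 * dm) := by
    intro t
    have hdiff : W (t+1) - W t = -(α • (U t * (V t)ᵀ)) := by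
      rw [hupd t]; abel
    have h1' : Matrix.trace ((G (W t))ᵀ * (W (t+1) - W t)) = -(α * S t) := by
      rw [hdiff, hG t]
      rw [Matrix.mul_neg, Matrix.trace_neg, Matrix.mul_smul, Matrix.trace_smul]
      have : ((U t * Matrix.diagonal (σv t) * (V t)ᵀ)ᵀ * (U t * (V t)ᵀ))
          = V t * Matrix.diagonal (σv t) * (V t)ᵀ := by
        rw [Matrix.transpose_mul, Matrix.transpose_mul, Matrix.transpose_transpose,
          Matrix.diagonal_transpose]
        simp only [Matrix.mul_assoc]
        rw [← Matrix.mul_assoc ((U t)ᵀ) (U t) ((V t)ᵀ), hU t, Matrix.one_mul]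
      rw [this]
      have : Matrix.trace (V t * Matrix.diagonal (σv t) * (V t)ᵀ)
          = Matrix.trace (Matrix.diagonal (σv t)) := by
        rw [Matrix.trace_mul_cycle, hV t, Matrix.one_mul]
      rw [this, Matrix.trace_diagonal]
      simp [smul_eq_mul]; exact Or.inl rfl
    have h2' : Matrix.trace ((W (t+1) - W t)ᵀ * (W (t+1) - W t)) = α^2 * dm := by
      rw [hdiff]
      rw [Matrix.transpose_neg, Matrix.transpose_smul, Matrix.neg_mul, Matrix.mul_neg,
        neg_neg, Matrix.smul_mul, Matrix.mul_smul, Matrix.trace_smul, Matrix.trace_smul]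
      have : ((U t * (V t)ᵀ)ᵀ * (U t * (V t)ᵀ)) = V t * (V t)ᵀ := by
        rw [Matrix.transpose_mul, Matrix.transpose_transpose]
        calc V t * (U t)ᵀ * (U t * (V t)ᵀ)
            = V t * ((U t)ᵀ * U t) * (V t)ᵀ := by simp only [Matrix.mul_assoc]
          _ = V t * (V t)ᵀ := by rw [hU t]; simp
      rw [this]
      have : Matrix.trace (V t * (V t)ᵀ) = dm := by
        rw [Matrix.trace_mul_comm, hV t, Matrix.trace_one]
        simp [hdm]
      rw [this]
      simp [smul_eq_mul]; ring
    have := hsmooth (W t) (W (t+1))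
    rw [h1', h2'] at this
    linarith
  -- telescoping
  have tele : ∀ n : ℕ, L (W n) ≤ L (W 0) - α * ∑ t ∈ Finset.range n, S t
      + n * (Λ / 2 * (α^2 * dm)) := by
    intro n
    induction n with
    | zero => simp
    | succ n ih =>
      have := key n
      rw [Finset.sum_range_succ]
      push_cast
      linarith
  have hsum := tele T
  have hLB := hLstarLB (W T)
  -- min ≤ average
  set m : ℝ := (Finset.range T).inf' (Finset.nonempty_range_iff.mpr (by omega)) S with hm
  have hmin : (T : ℝ) * m ≤ ∑ t ∈ Finset.range T, S t := by
    have : ∀ t ∈ Finset.range T, m ≤ S t := fun t ht => Finset.inf'_le _ ht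
    calc (T : ℝ) * m = ∑ _t ∈ Finset.range T, m := by
          rw [Finset.sum_const, Finset.card_range, nsmul_eq_mul]
      _ ≤ ∑ t ∈ Finset.range T, S t := Finset.sum_le_sum this
  have hTpos : (0:ℝ) < (T:ℝ) := by exact_mod_cast hT
  have hTα : (0:ℝ) < (T:ℝ) * α := by positivity
  rw [← sub_le_iff_le_add, le_div_iff₀ hTα]
  have hα2 : α * ((T:ℝ) * m) ≤ α * ∑ t ∈ Finset.range T, S t :=
    mul_le_mul_of_nonneg_left hmin hα.le
  nlinarith [hα2]
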